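/- arXiv:2006.08074 — 2 statements merged into one kernel-verified Lean document; each statement's English description precedes it below -/
import Mathlib

section
/- Let R be a ring, n a positive integer, and a,b,c,d ∈ R satisfy (ac)² = (db)(ac), (db)² = (ac)(db), b(ac)a = b(db)a, and c(ac)d = c(db)d. Then (1-bd)^n has a generalized Drazin inverse if and only if (1-ac)^n has a generalized Drazin inverse. -/
/-- An element is quasinilpotent if `1 + a*x` is a unit for every `x` commuting with `a`. -/
def Quasinilpotent {R : Type*} [Ring R] (a : R) : Prop :=
  ∀ x : R, x * a = a * x → IsUnit (1 + a * x)

/-- `x` is a generalized Drazin inverse of `a`. -/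
def IsGDrazin {R : Type*} [Ring R] (a x : R) : Prop :=
  x = x * a * x ∧ (∀ y : R, y * a = a * y → x * y = y * x) ∧
    Quasinilpotent (a - a ^ 2 * x)

section Helpers
variable {R : Type*} [Ring R]

lemma comm_mul' {x a b : R} (h1 : x*a = a*x) (h2 : x*b = b*x) : x*(a*b) = (a*b)*x := by
  rw [← mul_assoc, h1, mul_assoc, h2, ← mul_assoc]

lemma comm_add' {x a b : R} (h1 : x*a = a*x) (h2 : x*b = b*x) : x*(a+b) = (a+b)*x := by
  rw [mul_add, add_mul, h1, h2]

lemma comm_sub' {x a b : R} (h1 : x*a = a*x) (h2 : x*b = b*x) : x*(a-b) = (a-b)*x := by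
  rw [mul_sub, sub_mul, h1, h2]

lemma comm_one' (x : R) : x*(1:R) = 1*x := by rw [mul_one, one_mul]

lemma comm_inv' {g gi z : R} (h1 : g*gi = 1) (h2 : gi*g = 1) (hz : z*g = g*z) :
    z*gi = gi*z := by
  calc z*gi = (gi*g)*(z*gi) := by rw [h2, one_mul]
    _ = gi*((g*z)*gi) := by rw [mul_assoc, mul_assoc]
    _ = gi*((z*g)*gi) := by rw [hz]
    _ = (gi*z)*(g*gi) := by noncomm_ring
    _ = gi*z := by rw [h1, mul_one]

lemma j1 (a b : R) (h : IsUnit (1 + a*b)) : IsUnit (1 + b*a) := by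
  obtain ⟨r, hr1, hr2⟩ := isUnit_iff_exists.mp h
  refine isUnit_iff_exists.mpr ⟨1 - b*r*a, ?_, ?_⟩
  · have h0 : (1 + b*a) * (1 - b*r*a) = 1 + b*a - b*((1+a*b)*r)*a := by noncomm_ring
    rw [h0, hr1]; noncomm_ring
  · have h0 : (1 - b*r*a) * (1 + b*a) = 1 + b*a - b*(r*(1+a*b))*a := by noncomm_ring
    rw [h0, hr2]; noncomm_ring

lemma unit_of_comm_mul {x y : R} (hc : x*y = y*x) (h : IsUnit (x*y)) : IsUnit x := by
  obtain ⟨w, hw1, hw2⟩ := isUnit_iff_exists.mp h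
  refine isUnit_iff_exists.mpr ⟨y*w, by rw [← mul_assoc]; exact hw1, ?_⟩
  have hleft : (w*y)*x = 1 := by rw [mul_assoc, ← hc]; exact hw2
  have heq : y*w = w*y := by
    calc y*w = ((w*y)*x)*(y*w) := by rw [hleft, one_mul]
      _ = (w*y)*(x*(y*w)) := by rw [mul_assoc]
      _ = w*y := by rw [← mul_assoc x y w, hw1, mul_one]
  rw [heq]; exact hleft

lemma j2 {x y : R} (h : Quasinilpotent (x*y)) : Quasinilpotent (y*x) := by
  have step : ∀ t : R, t*(y*x) = (y*x)*t → IsUnit (1 + (y*x)*((y*x)*t)) := by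
    intro t ht
    have hs : (x*t*y)*(x*y) = (x*y)*(x*t*y) := by
      calc (x*t*y)*(x*y) = x*(t*(y*x))*y := by noncomm_ring
        _ = x*((y*x)*t)*y := by rw [ht]
        _ = (x*y)*(x*t*y) := by noncomm_ring
    have h1 := h (x*t*y) hs
    have h2 : (1 : R) + (x*y)*(x*t*y) = 1 + x*(y*x*t*y) := by noncomm_ring
    rw [h2] at h1
    have h3 := j1 x (y*x*t*y) h1
    have h4 : (1:R) + (y*x*t*y)*x = 1 + (y*x)*((y*x)*t) := by
      calc (1:R) + (y*x*t*y)*x = 1 + (y*x)*(t*(y*x)) := by noncomm_ring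
        _ = 1 + (y*x)*((y*x)*t) := by rw [ht]
    rwa [h4] at h3
  intro t ht
  have h1tt : (t*t)*(y*x) = (y*x)*(t*t) := by
    calc (t*t)*(y*x) = t*(t*(y*x)) := by noncomm_ring
      _ = t*((y*x)*t) := by rw [ht]
      _ = (t*(y*x))*t := by noncomm_ring
      _ = ((y*x)*t)*t := by rw [ht]
      _ = (y*x)*(t*t) := by noncomm_ring
  have hcomm : (-(t*t))*(y*x) = (y*x)*(-(t*t)) := by
    calc (-(t*t))*(y*x) = -((t*t)*(y*x)) := by noncomm_ring
      _ = -((y*x)*(t*t)) := by rw [h1tt]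
      _ = (y*x)*(-(t*t)) := by noncomm_ring
  have hu := step (-(t*t)) hcomm
  have hc : ((y*x)*t)*((y*x)*t) = (y*x)*((y*x)*(t*t)) := by
    calc ((y*x)*t)*((y*x)*t) = (y*x)*(t*(y*x))*t := by noncomm_ring
      _ = (y*x)*((y*x)*t)*t := by rw [ht]
      _ = (y*x)*((y*x)*(t*t)) := by noncomm_ring
  have hfac : (1 + (y*x)*t)*(1 - (y*x)*t) = 1 + (y*x)*((y*x)*(-(t*t))) := by
    have h0 : (1 + (y*x)*t)*(1 - (y*x)*t) = 1 - ((y*x)*t)*((y*x)*t) := by noncomm_ring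
    rw [h0, hc]; noncomm_ring
  have hcomm2 : (1 + (y*x)*t)*(1 - (y*x)*t) = (1 - (y*x)*t)*(1 + (y*x)*t) := by noncomm_ring
  have hun : IsUnit ((1 + (y*x)*t)*(1 - (y*x)*t)) := by rw [hfac]; exact hu
  exact unit_of_comm_mul hcomm2 hun

end Helpers

section LemE
variable {R : Type*} [Ring R]

lemma lemE (s σ n m y : R) (hy : IsGDrazin (1 - s) y)
    (r1 : n * s = σ * n) (r2 : s * m = m * σ)
    (r3 : m * n = s ^ 3) (r4 : n * m = σ ^ 3) :
    ∃ z : R, IsGDrazin (1 - σ) z := by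
  obtain ⟨hy1, hy2, hy3⟩ := hy
  have cyξ : y * (1-s) = (1-s) * y := hy2 (1-s) rfl
  have cys : y * s = s * y := by
    have h : y - y*s = y - s*y := by
      calc y - y*s = y*(1-s) := by noncomm_ring
        _ = (1-s)*y := cyξ
        _ = y - s*y := by noncomm_ring
    exact sub_right_inj.mp h
  obtain ⟨P, hP⟩ : ∃ t : R, t = 1 - (1-s)*y := ⟨_, rfl⟩
  have hyP : y * P = 0 := by
    rw [hP]
    calc y * (1 - (1-s)*y) = y - y*(1-s)*y := by noncomm_ring
      _ = 0 := by rw [← hy1]; exact sub_self y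
  have hPy : P * y = 0 := by
    rw [hP]
    calc (1 - (1-s)*y)*y = y - ((1-s)*y)*y := by noncomm_ring
      _ = y - (y*(1-s))*y := by rw [← cyξ]
      _ = 0 := by rw [show (y*(1-s))*y = y*(1-s)*y from rfl, ← hy1]; exact sub_self y
  have hPP : P * P = P := by
    rw [hP]
    calc (1 - (1-s)*y)*(1 - (1-s)*y)
        = 1 - (1-s)*y - (1-s)*y + (1-s)*(y*(1-s)*y) := by noncomm_ring
      _ = 1 - (1-s)*y - (1-s)*y + (1-s)*y := by rw [← hy1]
      _ = 1 - (1-s)*y := by noncomm_ring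
  have hPs : P * s = s * P := by
    rw [hP]
    calc (1 - (1-s)*y)*s = s - (1-s)*(y*s) := by noncomm_ring
      _ = s - (1-s)*(s*y) := by rw [cys]
      _ = s*(1 - (1-s)*y) := by noncomm_ring
  have hPξ : P * (1-s) = (1-s) * P := comm_sub' (comm_one' P) hPs
  obtain ⟨e, he⟩ : ∃ t : R, t = (1-s)*P := ⟨_, rfl⟩
  have heP : e * P = e := by rw [he, mul_assoc, hPP]
  have hPe : P * e = e := by
    rw [he, ← mul_assoc, hPξ, mul_assoc, hPP]
  have hes : e * s = s * e := by
    rw [he]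
    calc ((1-s)*P)*s = (1-s)*(P*s) := by rw [mul_assoc]
      _ = (1-s)*(s*P) := by rw [hPs]
      _ = ((1-s)*s)*P := by rw [mul_assoc]
      _ = (s*(1-s))*P := by noncomm_ring
      _ = s*((1-s)*P) := by rw [mul_assoc]
  have hye : y * e = 0 := by rw [he, ← mul_assoc, cyξ, mul_assoc, hyP, mul_zero]
  have hey : e * y = 0 := by rw [he, mul_assoc, hPy, mul_zero]
  have heq0 : e = (1-s) - (1-s)^2*y := by rw [he, hP]; noncomm_ring
  have qe : Quasinilpotent e := by rw [heq0]; exact hy3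
  have hκu : IsUnit (1 - e) := by
    have h := qe (-1) (by noncomm_ring)
    rwa [show (1:R) + e*(-1) = 1 - e from by noncomm_ring] at h
  obtain ⟨κ, hκ1, hκ2⟩ := isUnit_iff_exists.mp hκu
  have hk2u : IsUnit (1 + e) := by
    have h := qe 1 (by rw [one_mul, mul_one])
    rwa [mul_one] at h
  obtain ⟨k2, hk21, hk22⟩ := isUnit_iff_exists.mp hk2u
  have hcκ : ∀ z : R, z*e = e*z → z*κ = κ*z := by
    intro z hz
    exact comm_inv' hκ1 hκ2 (by rw [mul_sub, sub_mul, mul_one, one_mul, hz])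
  have hck2 : ∀ z : R, z*e = e*z → z*k2 = k2*z := by
    intro z hz
    exact comm_inv' hk21 hk22 (by rw [mul_add, add_mul, mul_one, one_mul, hz])
  have hsκ : s*κ = κ*s := hcκ s hes.symm
  have hPκ : P*κ = κ*P := hcκ P (by rw [hPe, heP])
  have hyκ : y*κ = κ*y := hcκ y (by rw [hye, hey])
  have hsk2 : s*k2 = k2*s := hck2 s hes.symm
  have hPk2 : P*k2 = k2*P := hck2 P (by rw [hPe, heP])
  have hyk2 : y*k2 = k2*y := hck2 y (by rw [hye, hey])
  have hξκ : (1-s)*κ = κ*(1-s) := by rw [sub_mul, mul_sub, one_mul, mul_one, hsκ]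
  have hξk2 : (1-s)*k2 = k2*(1-s) := by rw [sub_mul, mul_sub, one_mul, mul_one, hsk2]
  have hsP : s*P = P - e := by rw [he]; noncomm_ring
  have h1eP : (1-e)*P = P - e := by rw [sub_mul, one_mul, heP]
  have hswap : ∀ z : R, s*(κ*z) = κ*(s*z) := by
    intro z; rw [← mul_assoc, hsκ, mul_assoc]
  have hsκP : s*(κ*P) = P := by
    rw [hswap, hsP, ← h1eP, ← mul_assoc, hκ2, one_mul]
  obtain ⟨G, hG⟩ : ∃ t : R, t = κ*(κ*(κ*P)) := ⟨_, rfl⟩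
  have hB2 : s*(κ*(κ*P)) = κ*P := by rw [hswap (κ*P), hsκP]
  have hB3 : s*(κ*(κ*(κ*P))) = κ*(κ*P) := by rw [hswap (κ*(κ*P)), hB2]
  have hs3G : s^3*G = P := by
    have h0 : s^3*G = s*(s*(s*(κ*(κ*(κ*P))))) := by rw [hG]; noncomm_ring
    rw [h0, hB3, hB2, hsκP]
  have cswap : ∀ z : R, z*s = s*z → (κ*z)*s = s*(κ*z) := by
    intro z hz; rw [mul_assoc, hz, ← mul_assoc, ← hsκ, mul_assoc]
  have hGs : G*s = s*G := by rw [hG]; exact cswap _ (cswap _ (cswap _ hPs))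
  have hGs3 : G*s^3 = s^3*G := by
    have h0 : G*(s*(s*s)) = (s*(s*s))*G := comm_mul' hGs (comm_mul' hGs hGs)
    calc G*s^3 = G*(s*(s*s)) := by noncomm_ring
      _ = (s*(s*s))*G := h0
      _ = s^3*G := by noncomm_ring
  have hGP : G*P = G := by rw [hG, mul_assoc, mul_assoc, mul_assoc, hPP]
  have hPswap : ∀ z : R, P*(κ*z) = κ*(P*z) := by
    intro z; rw [← mul_assoc, hPκ, mul_assoc]
  have hPG : P*G = G := by rw [hG, hPswap (κ*(κ*P)), hPswap (κ*P), hPswap P, hPP]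
  have hGξ : G*(1-s) = (1-s)*G := by rw [mul_sub, sub_mul, mul_one, one_mul, hGs]
  obtain ⟨Q, hQ⟩ : ∃ t : R, t = n*(G*m) := ⟨_, rfl⟩
  have i1 : (1-σ)*n = n*(1-s) := by rw [sub_mul, mul_sub, one_mul, mul_one, r1]
  have i2 : (1-s)*m = m*(1-σ) := by rw [sub_mul, mul_sub, one_mul, mul_one, r2]
  have hQQ : Q*Q = Q := by
    rw [hQ]
    calc (n*(G*m))*(n*(G*m)) = n*(G*((m*n)*(G*m))) := by noncomm_ring
      _ = n*(G*((s^3)*(G*m))) := by rw [r3]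
      _ = n*(((G*s^3)*G)*m) := by noncomm_ring
      _ = n*(((s^3*G)*G)*m) := by rw [hGs3]
      _ = n*((P*G)*m) := by rw [hs3G]
      _ = n*(G*m) := by rw [hPG]
  have hQσ : Q*(1-σ) = (1-σ)*Q := by
    rw [hQ]
    calc (n*(G*m))*(1-σ) = n*(G*(m*(1-σ))) := by noncomm_ring
      _ = n*(G*((1-s)*m)) := by rw [← i2]
      _ = n*((G*(1-s))*m) := by noncomm_ring
      _ = n*(((1-s)*G)*m) := by rw [hGξ]
      _ = ((1-σ)*n)*(G*m) := by rw [i1]; noncomm_ring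
      _ = (1-σ)*(n*(G*m)) := by noncomm_ring
  -- quasinilpotent part
  have hξswap : ∀ z : R, (1-s)*(κ*z) = κ*((1-s)*z) := by
    intro z; rw [← mul_assoc, hξκ, mul_assoc]
  have hξG : (1-s)*G = κ*(κ*(κ*e)) := by
    rw [hG, hξswap (κ*(κ*P)), hξswap (κ*P), hξswap P, ← he]
  have hβQe : (1-σ)*Q = (n*(κ*(κ*(κ*e))))*m := by
    rw [hQ]
    calc (1-σ)*(n*(G*m)) = ((1-σ)*n)*(G*m) := by noncomm_ring
      _ = (n*(1-s))*(G*m) := by rw [i1]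
      _ = n*(((1-s)*G)*m) := by noncomm_ring
      _ = n*((κ*(κ*(κ*e)))*m) := by rw [hξG]
      _ = (n*(κ*(κ*(κ*e))))*m := by noncomm_ring
  have hee' : e*e = (1-s)*e := by
    have h0 : ((1-s)*P)*e = (1-s)*e := by rw [mul_assoc, hPe]
    rw [← he] at h0; exact h0
  have hse : s*e = (1-e)*e := by
    rw [sub_mul, one_mul, hee']; noncomm_ring
  have hsκe : s*(κ*e) = e := by
    rw [hswap, hse, ← mul_assoc, hκ2, one_mul]
  have hA2 : s*(κ*(κ*e)) = κ*e := by rw [hswap (κ*e), hsκe]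
  have hA3 : s*(κ*(κ*(κ*e))) = κ*(κ*e) := by rw [hswap (κ*(κ*e)), hA2]
  have hXY : m*(n*(κ*(κ*(κ*e)))) = e := by
    calc m*(n*(κ*(κ*(κ*e)))) = (m*n)*(κ*(κ*(κ*e))) := by rw [mul_assoc]
      _ = s^3*(κ*(κ*(κ*e))) := by rw [r3]
      _ = s*(s*(s*(κ*(κ*(κ*e))))) := by noncomm_ring
      _ = e := by rw [hA3, hA2, hsκe]
  have hqnilβQ : Quasinilpotent ((1-σ)*Q) := by
    have hx : Quasinilpotent (m*(n*(κ*(κ*(κ*e))))) := by rw [hXY]; exact qe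
    have h := j2 hx
    rwa [← hβQe] at h
  -- the unit (1-σ) + Q
  have hξy : (1-s)*y = 1 - P := by rw [hP]; noncomm_ring
  have hyξ' : y*(1-s) = 1 - P := by rw [cyξ]; exact hξy
  obtain ⟨Mb, hMb⟩ : ∃ t : R, t = y + k2*P := ⟨_, rfl⟩
  have hξk2P : (1-s)*(k2*P) = k2*e := by
    rw [← mul_assoc, hξk2, mul_assoc, ← he]
  have hPk2P : P*(k2*P) = k2*P := by rw [← mul_assoc, hPk2, mul_assoc, hPP]
  have hk2eP : k2*e + k2*P = P := by
    have h2' : (1+e)*P = P + e := by rw [add_mul, one_mul, heP]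
    calc k2*e + k2*P = k2*(P + e) := by rw [mul_add, add_comm]
      _ = k2*((1+e)*P) := by rw [h2']
      _ = (k2*(1+e))*P := by rw [mul_assoc]
      _ = P := by rw [hk22, one_mul]
  have hM1 : ((1-s)+P)*Mb = 1 := by
    rw [hMb]
    calc ((1-s)+P)*(y + k2*P)
        = (1-s)*y + (1-s)*(k2*P) + P*y + P*(k2*P) := by noncomm_ring
      _ = (1 - P) + k2*e + 0 + k2*P := by rw [hξy, hξk2P, hPy, hPk2P]
      _ = (1 - P) + (k2*e + k2*P) := by noncomm_ring
      _ = (1 - P) + P := by rw [hk2eP]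
      _ = 1 := by noncomm_ring
  have hM2 : Mb*((1-s)+P) = 1 := by
    rw [hMb]
    have hk2Pξ : (k2*P)*(1-s) = k2*e := by
      rw [mul_assoc, hPξ, ← mul_assoc, ← hξk2, mul_assoc]; exact hξk2P
    have hk2PP : (k2*P)*P = k2*P := by rw [mul_assoc, hPP]
    calc (y + k2*P)*((1-s)+P)
        = y*(1-s) + y*P + (k2*P)*(1-s) + (k2*P)*P := by noncomm_ring
      _ = (1 - P) + 0 + k2*e + k2*P := by rw [hyξ', hyP, hk2Pξ, hk2PP]
      _ = (1 - P) + (k2*e + k2*P) := by noncomm_ring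
      _ = (1 - P) + P := by rw [hk2eP]
      _ = 1 := by noncomm_ring
  obtain ⟨Y0, hY0⟩ : ∃ t : R, t = G*(1 + s + s^2) := ⟨_, rfl⟩
  obtain ⟨Lam, hLam⟩ : ∃ t : R, t = Mb*(1 - Y0) := ⟨_, rfl⟩
  obtain ⟨V, hV⟩ : ∃ t : R, t = (1 + σ + σ^2) + n*(Lam*m) := ⟨_, rfl⟩
  have hmσ : m*σ = s*m := r2.symm
  have hnσ : σ*n = n*s := r1.symm
  have hmρ : m*(1 + σ + σ^2) = (1 + s + s^2)*m := by
    calc m*(1 + σ + σ^2) = m + m*σ + (m*σ)*σ := by noncomm_ring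
      _ = m + s*m + (s*m)*σ := by rw [hmσ]
      _ = m + s*m + s*(m*σ) := by rw [mul_assoc]
      _ = m + s*m + s*(s*m) := by rw [hmσ]
      _ = (1 + s + s^2)*m := by noncomm_ring
  have hρn : (1 + σ + σ^2)*n = n*(1 + s + s^2) := by
    calc (1 + σ + σ^2)*n = n + σ*n + σ*(σ*n) := by noncomm_ring
      _ = n + n*s + σ*(n*s) := by rw [hnσ]
      _ = n + n*s + (σ*n)*s := by rw [mul_assoc]
      _ = n + n*s + (n*s)*s := by rw [hnσ]
      _ = n*(1 + s + s^2) := by noncomm_ring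
  have hQn : Q*n = n*P := by
    rw [hQ]
    calc (n*(G*m))*n = n*(G*(m*n)) := by noncomm_ring
      _ = n*(G*s^3) := by rw [r3]
      _ = n*(s^3*G) := by rw [hGs3]
      _ = n*P := by rw [hs3G]
  have hmQ : m*Q = P*m := by
    rw [hQ]
    calc m*(n*(G*m)) = ((m*n)*G)*m := by noncomm_ring
      _ = (s^3*G)*m := by rw [r3]
      _ = P*m := by rw [hs3G]
  have hρsG : (1 + s + s^2)*G = G*(1 + s + s^2) := by
    calc (1 + s + s^2)*G = G + s*G + s*(s*G) := by noncomm_ring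
      _ = G + G*s + s*(G*s) := by rw [hGs]
      _ = G + G*s + (s*G)*s := by rw [mul_assoc]
      _ = G + G*s + (G*s)*s := by rw [hGs]
      _ = G*(1 + s + s^2) := by noncomm_ring
  have hρsP : (1 + s + s^2)*P = P*(1 + s + s^2) := by
    calc (1 + s + s^2)*P = P + s*P + s*(s*P) := by noncomm_ring
      _ = P + P*s + s*(P*s) := by rw [hPs]
      _ = P + P*s + (s*P)*s := by rw [mul_assoc]
      _ = P + P*s + (P*s)*s := by rw [hPs]
      _ = P*(1 + s + s^2) := by noncomm_ring
  have hY0s : Y0*s = s*Y0 := by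
    rw [hY0]
    calc (G*(1 + s + s^2))*s = G*((1 + s + s^2)*s) := by rw [mul_assoc]
      _ = G*(s*(1 + s + s^2)) := by rw [show (1 + s + s^2)*s = s*(1 + s + s^2) from by noncomm_ring]
      _ = (G*s)*(1 + s + s^2) := by rw [mul_assoc]
      _ = (s*G)*(1 + s + s^2) := by rw [hGs]
      _ = s*(G*(1 + s + s^2)) := by rw [mul_assoc]
  have hY0P : Y0*P = P*Y0 := by
    rw [hY0]
    calc (G*(1 + s + s^2))*P = G*((1 + s + s^2)*P) := by rw [mul_assoc]
      _ = G*(P*(1 + s + s^2)) := by rw [hρsP]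
      _ = (G*P)*(1 + s + s^2) := by rw [mul_assoc]
      _ = (P*G)*(1 + s + s^2) := by rw [hGP, hPG]
      _ = P*(G*(1 + s + s^2)) := by rw [mul_assoc]
  have hY0ξP : Y0*((1-s)+P) = ((1-s)+P)*Y0 :=
    comm_add' (comm_sub' (comm_one' Y0) hY0s) hY0P
  have hξPΛ : ((1-s)+P)*Lam = 1 - Y0 := by
    rw [hLam, ← mul_assoc, hM1, one_mul]
  have hΛξP : Lam*((1-s)+P) = 1 - Y0 := by
    rw [hLam]
    have hc : (1 - Y0)*((1-s)+P) = ((1-s)+P)*(1 - Y0) := by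
      rw [sub_mul, mul_sub, one_mul, mul_one, hY0ξP]
    rw [mul_assoc, hc, ← mul_assoc, hM2, one_mul]
  have hUV : ((1-σ)+Q)*V = 1 := by
    have expand : ((1-σ)+Q)*V
        = (1-σ)*(1 + σ + σ^2) + ((1-σ)*n)*(Lam*m) + Q*(1 + σ + σ^2) + (Q*n)*(Lam*m) := by
      rw [hV]; noncomm_ring
    have p1 : (1-σ)*(1 + σ + σ^2) = 1 - σ^3 := by noncomm_ring
    have p2 : ((1-σ)*n)*(Lam*m) = n*(((1-s)*Lam)*m) := by rw [i1]; noncomm_ring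
    have p3 : Q*(1 + σ + σ^2) = n*(Y0*m) := by
      rw [hQ, hY0]
      calc (n*(G*m))*(1 + σ + σ^2) = n*(G*(m*(1 + σ + σ^2))) := by noncomm_ring
        _ = n*(G*((1 + s + s^2)*m)) := by rw [hmρ]
        _ = n*((G*(1 + s + s^2))*m) := by noncomm_ring
    have p4 : (Q*n)*(Lam*m) = n*((P*Lam)*m) := by rw [hQn]; noncomm_ring
    have inner : (1-s)*Lam + Y0 + P*Lam = 1 := by
      have h5 : (1-s)*Lam + Y0 + P*Lam = ((1-s)+P)*Lam + Y0 := by noncomm_ring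
      rw [h5, hξPΛ]; noncomm_ring
    calc ((1-σ)+Q)*V
        = (1-σ)*(1 + σ + σ^2) + ((1-σ)*n)*(Lam*m) + Q*(1 + σ + σ^2) + (Q*n)*(Lam*m) := expand
      _ = (1 - σ^3) + n*(((1-s)*Lam)*m) + n*(Y0*m) + n*((P*Lam)*m) := by rw [p1, p2, p3, p4]
      _ = (1 - σ^3) + n*(((1-s)*Lam + Y0 + P*Lam)*m) := by noncomm_ring
      _ = (1 - σ^3) + n*((1:R)*m) := by rw [inner]
      _ = (1 - σ^3) + n*m := by rw [one_mul]
      _ = (1 - σ^3) + σ^3 := by rw [r4]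
      _ = 1 := by noncomm_ring
  have hVU : V*((1-σ)+Q) = 1 := by
    have expand : V*((1-σ)+Q)
        = (1 + σ + σ^2)*(1-σ) + (1 + σ + σ^2)*Q + (n*(Lam*m))*(1-σ) + (n*(Lam*m))*Q := by
      rw [hV]; noncomm_ring
    have q1 : (1 + σ + σ^2)*(1-σ) = 1 - σ^3 := by noncomm_ring
    have q2 : (1 + σ + σ^2)*Q = n*(Y0*m) := by
      calc (1 + σ + σ^2)*Q = ((1 + σ + σ^2)*n)*(G*m) := by rw [hQ]; noncomm_ring
        _ = (n*(1 + s + s^2))*(G*m) := by rw [hρn]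
        _ = n*(((1 + s + s^2)*G)*m) := by noncomm_ring
        _ = n*((G*(1 + s + s^2))*m) := by rw [hρsG]
        _ = n*(Y0*m) := by rw [hY0]
    have q3 : (n*(Lam*m))*(1-σ) = n*((Lam*(1-s))*m) := by
      calc (n*(Lam*m))*(1-σ) = n*(Lam*(m*(1-σ))) := by noncomm_ring
        _ = n*(Lam*((1-s)*m)) := by rw [← i2]
        _ = n*((Lam*(1-s))*m) := by noncomm_ring
    have q4 : (n*(Lam*m))*Q = n*((Lam*P)*m) := by
      calc (n*(Lam*m))*Q = n*(Lam*(m*Q)) := by noncomm_ring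
        _ = n*(Lam*(P*m)) := by rw [hmQ]
        _ = n*((Lam*P)*m) := by noncomm_ring
    have inner : Y0 + Lam*(1-s) + Lam*P = 1 := by
      have h5 : Y0 + Lam*(1-s) + Lam*P = Lam*((1-s)+P) + Y0 := by noncomm_ring
      rw [h5, hΛξP]; noncomm_ring
    calc V*((1-σ)+Q)
        = (1 + σ + σ^2)*(1-σ) + (1 + σ + σ^2)*Q + (n*(Lam*m))*(1-σ) + (n*(Lam*m))*Q := expand
      _ = (1 - σ^3) + n*(Y0*m) + n*((Lam*(1-s))*m) + n*((Lam*P)*m) := by rw [q1, q2, q3, q4]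
      _ = (1 - σ^3) + n*((Y0 + Lam*(1-s) + Lam*P)*m) := by noncomm_ring
      _ = (1 - σ^3) + n*((1:R)*m) := by rw [inner]
      _ = (1 - σ^3) + n*m := by rw [one_mul]
      _ = (1 - σ^3) + σ^3 := by rw [r4]
      _ = 1 := by noncomm_ring
  -- commutation with the inverse V
  have hQU : Q*((1-σ)+Q) = ((1-σ)+Q)*Q := by
    rw [mul_add, add_mul, hQσ]
  have hQV : Q*V = V*Q := comm_inv' hUV hVU hQU
  have hσU : (1-σ)*((1-σ)+Q) = ((1-σ)+Q)*(1-σ) := by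
    rw [mul_add, add_mul, hQσ]
  have hσV : (1-σ)*V = V*(1-σ) := comm_inv' hUV hVU hσU
  -- z and its properties
  obtain ⟨z, hz⟩ : ∃ t : R, t = V*(1-Q) := ⟨_, rfl⟩
  have hQ1Q : Q*(1-Q) = 0 := by rw [mul_sub, mul_one, hQQ]; exact sub_self Q
  have hkey : (1 - Q*V)*(1-Q) = 1 - Q := by
    calc (1 - Q*V)*(1-Q) = (1-Q) - (Q*V)*(1-Q) := by noncomm_ring
      _ = (1-Q) - (V*Q)*(1-Q) := by rw [hQV]
      _ = (1-Q) - V*(Q*(1-Q)) := by rw [mul_assoc]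
      _ = 1 - Q := by rw [hQ1Q, mul_zero, sub_zero]
  have hβV : (1-σ)*V = 1 - Q*V := by
    calc (1-σ)*V = (((1-σ)+Q) - Q)*V := by noncomm_ring
      _ = ((1-σ)+Q)*V - Q*V := by rw [sub_mul]
      _ = 1 - Q*V := by rw [hUV]
  have hβz : (1-σ)*z = 1 - Q := by
    rw [hz, ← mul_assoc, hβV, hkey]
  have hzβ : z*(1-σ) = 1 - Q := by
    have hQσ' : Q*σ = σ*Q := by
      have h : Q - Q*σ = Q - σ*Q := by
        calc Q - Q*σ = Q*(1-σ) := by noncomm_ring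
          _ = (1-σ)*Q := hQσ
          _ = Q - σ*Q := by noncomm_ring
      exact sub_right_inj.mp h
    have hc : (1-Q)*(1-σ) = (1-σ)*(1-Q) := by
      calc (1-Q)*(1-σ) = 1 - σ - Q + Q*σ := by noncomm_ring
        _ = 1 - σ - Q + σ*Q := by rw [hQσ']
        _ = (1-σ)*(1-Q) := by noncomm_ring
    calc z*(1-σ) = V*((1-Q)*(1-σ)) := by rw [hz, mul_assoc]
      _ = V*((1-σ)*(1-Q)) := by rw [hc]
      _ = (V*(1-σ))*(1-Q) := by rw [mul_assoc]
      _ = ((1-σ)*V)*(1-Q) := by rw [hσV]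
      _ = (1 - Q*V)*(1-Q) := by rw [hβV]
      _ = 1 - Q := hkey
  have h1QV : (1-Q)*V = V*(1-Q) := by
    calc (1-Q)*V = V - Q*V := by noncomm_ring
      _ = V - V*Q := by rw [hQV]
      _ = V*(1-Q) := by noncomm_ring
  have h1Q1Q : (1-Q)*(1-Q) = 1-Q := by
    calc (1-Q)*(1-Q) = 1 - Q - Q + Q*Q := by noncomm_ring
      _ = 1 - Q := by rw [hQQ]; noncomm_ring
  have prop1 : z = z*(1-σ)*z := by
    calc z = V*(1-Q) := hz
      _ = V*((1-Q)*(1-Q)) := by rw [h1Q1Q]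
      _ = (V*(1-Q))*(1-Q) := by rw [mul_assoc]
      _ = ((1-Q)*V)*(1-Q) := by rw [h1QV]
      _ = (1-Q)*(V*(1-Q)) := by rw [mul_assoc]
      _ = (1-Q)*z := by rw [hz]
      _ = (z*(1-σ))*z := by rw [hzβ]
  have prop2 : ∀ t : R, t*(1-σ) = (1-σ)*t → z*t = t*z := by
    intro t ht
    have htσ : t*σ = σ*t := by
      have h : t - t*σ = t - σ*t := by
        calc t - t*σ = t*(1-σ) := by noncomm_ring
          _ = (1-σ)*t := ht
          _ = t - σ*t := by noncomm_ring
      exact sub_right_inj.mp h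
    have hτs : (m*t*n)*s = s*(m*t*n) := by
      calc (m*t*n)*s = (m*t)*(n*s) := by noncomm_ring
        _ = (m*t)*(σ*n) := by rw [r1]
        _ = m*(t*σ)*n := by noncomm_ring
        _ = m*(σ*t)*n := by rw [htσ]
        _ = (m*σ)*(t*n) := by noncomm_ring
        _ = (s*m)*(t*n) := by rw [← r2]
        _ = s*(m*t*n) := by noncomm_ring
    have hτξ : (m*t*n)*(1-s) = (1-s)*(m*t*n) := by
      rw [mul_sub, sub_mul, mul_one, one_mul, hτs]
    have hyτ : y*(m*t*n) = (m*t*n)*y := hy2 (m*t*n) hτξ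
    have hτP : (m*t*n)*P = P*(m*t*n) := by
      rw [hP]
      calc (m*t*n)*(1 - (1-s)*y) = (m*t*n) - ((m*t*n)*(1-s))*y := by noncomm_ring
        _ = (m*t*n) - ((1-s)*(m*t*n))*y := by rw [hτξ]
        _ = (m*t*n) - (1-s)*((m*t*n)*y) := by noncomm_ring
        _ = (m*t*n) - (1-s)*(y*(m*t*n)) := by rw [← hyτ]
        _ = (m*t*n) - ((1-s)*y)*(m*t*n) := by noncomm_ring
        _ = (1 - (1-s)*y)*(m*t*n) := by noncomm_ring
    have hτe : (m*t*n)*e = e*(m*t*n) := by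
      rw [he]; exact comm_mul' hτξ hτP
    have hτκ : (m*t*n)*κ = κ*(m*t*n) := hcκ _ hτe
    have hτG : (m*t*n)*G = G*(m*t*n) := by
      rw [hG]; exact comm_mul' hτκ (comm_mul' hτκ (comm_mul' hτκ hτP))
    have hmσ3 : m*σ^3 = s^3*m := by
      calc m*σ^3 = ((m*σ)*σ)*σ := by noncomm_ring
        _ = ((s*m)*σ)*σ := by rw [hmσ]
        _ = (s*(m*σ))*σ := by noncomm_ring
        _ = (s*(s*m))*σ := by rw [hmσ]
        _ = s*(s*(m*σ)) := by noncomm_ring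
        _ = s*(s*(s*m)) := by rw [hmσ]
        _ = s^3*m := by noncomm_ring
    have hσ3n : σ^3*n = n*s^3 := by
      calc σ^3*n = σ*(σ*(σ*n)) := by noncomm_ring
        _ = σ*(σ*(n*s)) := by rw [hnσ]
        _ = σ*((σ*n)*s) := by noncomm_ring
        _ = σ*((n*s)*s) := by rw [hnσ]
        _ = (σ*n)*(s*s) := by noncomm_ring
        _ = (n*s)*(s*s) := by rw [hnσ]
        _ = n*s^3 := by noncomm_ring
    have htσ3 : t*σ^3 = σ^3*t := by
      have h0 : t*(σ*(σ*σ)) = (σ*(σ*σ))*t := comm_mul' htσ (comm_mul' htσ htσ)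
      calc t*σ^3 = t*(σ*(σ*σ)) := by noncomm_ring
        _ = (σ*(σ*σ))*t := h0
        _ = σ^3*t := by noncomm_ring
    have hτm : (m*t*n)*m = (s^3*m)*t := by
      calc (m*t*n)*m = (m*t)*(n*m) := by noncomm_ring
        _ = (m*t)*σ^3 := by rw [r4]
        _ = m*(t*σ^3) := by rw [mul_assoc]
        _ = m*(σ^3*t) := by rw [htσ3]
        _ = (m*σ^3)*t := by rw [mul_assoc]
        _ = (s^3*m)*t := by rw [hmσ3]
    have hnτ : n*(m*t*n) = (t*n)*s^3 := by
      calc n*(m*t*n) = (n*m)*(t*n) := by noncomm_ring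
        _ = σ^3*(t*n) := by rw [r4]
        _ = (σ^3*t)*n := by rw [mul_assoc]
        _ = (t*σ^3)*n := by rw [← htσ3]
        _ = t*(σ^3*n) := by rw [mul_assoc]
        _ = t*(n*s^3) := by rw [hσ3n]
        _ = (t*n)*s^3 := by rw [mul_assoc]
    have hGG3 : G*(G*s^3) = G := by rw [hGs3, hs3G, hGP]
    have claimA : (Q*t)*Q = Q*t := by
      calc (Q*t)*Q = n*(G*((m*t*n)*(G*m))) := by rw [hQ]; noncomm_ring
        _ = n*(G*((G*(m*t*n))*m)) := by rw [show (m*t*n)*(G*m) = (G*(m*t*n))*m from by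
              rw [← mul_assoc, hτG]]
        _ = n*((G*G)*((m*t*n)*m)) := by noncomm_ring
        _ = n*((G*G)*((s^3*m)*t)) := by rw [hτm]
        _ = n*((G*(G*s^3))*(m*t)) := by noncomm_ring
        _ = n*(G*(m*t)) := by rw [hGG3]
        _ = Q*t := by rw [hQ]; noncomm_ring
    have claimB : (Q*t)*Q = t*Q := by
      calc (Q*t)*Q = n*((G*(m*t*n))*(G*m)) := by rw [hQ]; noncomm_ring
        _ = n*(((m*t*n)*G)*(G*m)) := by rw [hτG]
        _ = (n*(m*t*n))*(G*(G*m)) := by noncomm_ring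
        _ = ((t*n)*s^3)*(G*(G*m)) := by rw [hnτ]
        _ = t*(n*((s^3*G)*(G*m))) := by noncomm_ring
        _ = t*(n*(P*(G*m))) := by rw [hs3G]
        _ = t*(n*((P*G)*m)) := by noncomm_ring
        _ = t*(n*(G*m)) := by rw [hPG]
        _ = t*Q := by rw [hQ]
    have htQ : t*Q = Q*t := claimB.symm.trans claimA
    have htU : t*((1-σ)+Q) = ((1-σ)+Q)*t := by
      rw [mul_add, add_mul, ht, htQ]
    have htV : t*V = V*t := comm_inv' hUV hVU htU
    have h1Qt : (1-Q)*t = t*(1-Q) := by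
      calc (1-Q)*t = t - Q*t := by noncomm_ring
        _ = t - t*Q := by rw [← htQ]
        _ = t*(1-Q) := by noncomm_ring
    calc z*t = V*((1-Q)*t) := by rw [hz, mul_assoc]
      _ = V*(t*(1-Q)) := by rw [h1Qt]
      _ = (V*t)*(1-Q) := by rw [mul_assoc]
      _ = (t*V)*(1-Q) := by rw [← htV]
      _ = t*z := by rw [hz, mul_assoc]
  have prop3 : Quasinilpotent ((1-σ) - (1-σ)^2*z) := by
    have hexp : (1-σ) - (1-σ)^2*z = (1-σ)*Q := by
      calc (1-σ) - (1-σ)^2*z = (1-σ) - (1-σ)*((1-σ)*z) := by noncomm_ring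
        _ = (1-σ) - (1-σ)*(1-Q) := by rw [hβz]
        _ = (1-σ)*Q := by noncomm_ring
    rw [hexp]; exact hqnilβQ
  exact ⟨z, prop1, prop2, prop3⟩

end LemE

section Main
variable {R : Type*} [Ring R]

lemma jac_pair (p q : R) : (∃ x : R, IsGDrazin (1 - p*q) x) → ∃ z : R, IsGDrazin (1 - q*p) z := by
  rintro ⟨x, hx⟩
  exact lemE (p*q) (q*p) q (p*((q*p)*(q*p))) x hx (by noncomm_ring) (by noncomm_ring)
    (by noncomm_ring) (by noncomm_ring)

lemma main_n1 (a b c d : R)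
    (h1 : (a*c)^2 = (d*b)*(a*c)) (h2 : (d*b)^2 = (a*c)*(d*b))
    (h3 : b*(a*c)*a = b*(d*b)*a) (h4 : c*(a*c)*d = c*(d*b)*d) :
    (∃ x : R, IsGDrazin (1 - a*c) x) → ∃ z : R, IsGDrazin (1 - b*d) z := by
  intro hx
  obtain ⟨x1, hx1⟩ := jac_pair a c hx
  have R1 : (b*a)*(c*a) = (b*d)*(b*a) := by
    calc (b*a)*(c*a) = b*(a*c)*a := by noncomm_ring
      _ = b*(d*b)*a := h3
      _ = (b*d)*(b*a) := by noncomm_ring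
  have R2 : (c*a)*((c*d)*(b*d)) = ((c*d)*(b*d))*(b*d) := by
    calc (c*a)*((c*d)*(b*d)) = (c*(a*c)*d)*(b*d) := by noncomm_ring
      _ = (c*(d*b)*d)*(b*d) := by rw [h4]
      _ = ((c*d)*(b*d))*(b*d) := by noncomm_ring
  have R3 : ((c*d)*(b*d))*(b*a) = (c*a)^3 := by
    calc ((c*d)*(b*d))*(b*a) = (c*d)*((b*d)*(b*a)) := by noncomm_ring
      _ = (c*d)*((b*a)*(c*a)) := by rw [← R1]
      _ = c*((d*b)*(a*c))*a := by noncomm_ring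
      _ = c*((a*c)^2)*a := by rw [← h1]
      _ = (c*a)^3 := by noncomm_ring
  have R4 : (b*a)*((c*d)*(b*d)) = (b*d)^3 := by
    calc (b*a)*((c*d)*(b*d)) = b*((a*c)*(d*b))*d := by noncomm_ring
      _ = b*((d*b)^2)*d := by rw [← h2]
      _ = (b*d)^3 := by noncomm_ring
  exact lemE (c*a) (b*d) (b*a) ((c*d)*(b*d)) x1 hx1 R1 R2 R3 R4

end Main

section Power
variable {R : Type*} [Ring R]

theorem gdrazin_pow_iff' (n : ℕ) (a b c d : R)
    (h1 : (a * c) ^ 2 = (d * b) * (a * c)) (h2 : (d * b) ^ 2 = (a * c) * (d * b))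
    (h3 : b * (a * c) * a = b * (d * b) * a) (h4 : c * (a * c) * d = c * (d * b) * d) :
    (∃ x : R, IsGDrazin ((1 - b * d) ^ n) x) ↔ (∃ y : R, IsGDrazin ((1 - a * c) ^ n) y) := by
  obtain ⟨SA, hSA⟩ : ∃ t : R, t = ∑ j ∈ Finset.range n, (1 - a*c)^j := ⟨_, rfl⟩
  obtain ⟨SB, hSB⟩ : ∃ t : R, t = ∑ j ∈ Finset.range n, (1 - d*b)^j := ⟨_, rfl⟩
  have geomA : SA * (a*c) = 1 - (1 - a*c)^n := by
    have hg := geom_sum_mul (1 - a*c) n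
    rw [← hSA] at hg
    calc SA*(a*c) = -(SA*((1 - a*c) - 1)) := by noncomm_ring
      _ = -((1 - a*c)^n - 1) := by rw [hg]
      _ = 1 - (1 - a*c)^n := by noncomm_ring
  have geomB : SB * (d*b) = 1 - (1 - d*b)^n := by
    have hg := geom_sum_mul (1 - d*b) n
    rw [← hSB] at hg
    calc SB*(d*b) = -(SB*((1 - d*b) - 1)) := by noncomm_ring
      _ = -((1 - d*b)^n - 1) := by rw [hg]
      _ = 1 - (1 - d*b)^n := by noncomm_ring
  have key1 : (1 - a*c)^n = 1 - (SA*a)*c := by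
    rw [mul_assoc, geomA]; noncomm_ring
  have hCb : ∀ j : ℕ, (1 - b*d)^j*b = b*(1 - d*b)^j := by
    intro j; induction j with
    | zero => simp
    | succ j ih =>
      calc (1 - b*d)^(j+1)*b = (1 - b*d)^j*((1 - b*d)*b) := by rw [pow_succ]; noncomm_ring
        _ = (1 - b*d)^j*(b*(1 - d*b)) := by
              rw [show (1 - b*d)*b = b*(1 - d*b) from by noncomm_ring]
        _ = ((1 - b*d)^j*b)*(1 - d*b) := by noncomm_ring
        _ = (b*(1 - d*b)^j)*(1 - d*b) := by rw [ih]
        _ = b*(1 - d*b)^(j+1) := by rw [pow_succ]; noncomm_ring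
  have hSCb : (∑ j ∈ Finset.range n, (1 - b*d)^j)*b = b*SB := by
    rw [Finset.sum_mul, hSB, Finset.mul_sum]
    exact Finset.sum_congr rfl (fun j _ => hCb j)
  have key2 : (1 - b*d)^n = 1 - b*(SB*d) := by
    have hgc : (∑ j ∈ Finset.range n, (1 - b*d)^j)*(b*d) = 1 - (1 - b*d)^n := by
      have hg := geom_sum_mul (1 - b*d) n
      calc (∑ j ∈ Finset.range n, (1 - b*d)^j)*(b*d)
          = -((∑ j ∈ Finset.range n, (1 - b*d)^j)*((1 - b*d) - 1)) := by noncomm_ring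
        _ = -((1 - b*d)^n - 1) := by rw [hg]
        _ = 1 - (1 - b*d)^n := by noncomm_ring
    have h0 : (∑ j ∈ Finset.range n, (1 - b*d)^j)*(b*d) = b*(SB*d) := by
      rw [← mul_assoc, hSCb, mul_assoc]
    rw [h0] at hgc
    rw [hgc]; noncomm_ring
  obtain ⟨w, hw⟩ : ∃ t : R, t = a*c - d*b := ⟨_, rfl⟩
  have hwu : w*(a*c) = 0 := by
    have h0 : w*(a*c) = (a*c)*(a*c) - (d*b)*(a*c) := by rw [hw]; noncomm_ring
    rw [h0, ← pow_two, h1]; exact sub_self _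
  have hwv : w*(d*b) = 0 := by
    have h0 : w*(d*b) = (a*c)*(d*b) - (d*b)*(d*b) := by rw [hw]; noncomm_ring
    rw [h0, ← pow_two, h2]; exact sub_self _
  have hwA : w*(1 - a*c) = w := by rw [mul_sub, mul_one, hwu, sub_zero]
  have hwB : w*(1 - d*b) = w := by rw [mul_sub, mul_one, hwv, sub_zero]
  have hwAk : ∀ k : ℕ, w*(1 - a*c)^k = w := by
    intro k; induction k with
    | zero => simp
    | succ k ih => rw [pow_succ, ← mul_assoc, ih, hwA]
  have hwBk : ∀ k : ℕ, w*(1 - d*b)^k = w := by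
    intro k; induction k with
    | zero => simp
    | succ k ih => rw [pow_succ, ← mul_assoc, ih, hwB]
  have hww : w*w = 0 := by
    have h0 : w*w = w*(a*c) - w*(d*b) := by
      nth_rewrite 2 [hw]
      rw [mul_sub]
    rw [h0, hwu, hwv, sub_zero]
  have hBA : (1 - d*b) = (1 - a*c) + w := by rw [hw]; noncomm_ring
  have hdiff : ∀ k : ℕ, (1 - d*b)^k - (1 - a*c)^k = (∑ j ∈ Finset.range k, (1 - a*c)^j)*w := by
    intro k; induction k with
    | zero => simp
    | succ k ih =>
      have hBk : (1 - d*b)^k = (1 - a*c)^k + (∑ j ∈ Finset.range k, (1 - a*c)^j)*w := by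
        have h0 := sub_eq_iff_eq_add.mp ih
        rw [h0]; exact add_comm _ _
      calc (1 - d*b)^(k+1) - (1 - a*c)^(k+1)
          = (1 - d*b)^k*(1 - d*b) - (1 - a*c)^(k+1) := by rw [pow_succ]
        _ = ((1 - a*c)^k + (∑ j ∈ Finset.range k, (1 - a*c)^j)*w)*((1 - a*c) + w)
            - (1 - a*c)^(k+1) := by rw [← hBk, ← hBA]
        _ = ((1 - a*c)^k*(1 - a*c) - (1 - a*c)^(k+1)) + (1 - a*c)^k*w
            + (∑ j ∈ Finset.range k, (1 - a*c)^j)*(w*(1 - a*c))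
            + (∑ j ∈ Finset.range k, (1 - a*c)^j)*(w*w) := by noncomm_ring
        _ = ((1 - a*c)^k*(1 - a*c) - (1 - a*c)^(k+1)) + (1 - a*c)^k*w
            + (∑ j ∈ Finset.range k, (1 - a*c)^j)*w
            + (∑ j ∈ Finset.range k, (1 - a*c)^j)*0 := by rw [hwA, hww]
        _ = (∑ j ∈ Finset.range k, (1 - a*c)^j)*w + (1 - a*c)^k*w := by
              rw [← pow_succ]; noncomm_ring
        _ = (∑ j ∈ Finset.range (k+1), (1 - a*c)^j)*w := by
              rw [Finset.sum_range_succ, add_mul]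
  have hdiffn : (1 - d*b)^n - (1 - a*c)^n = SA*w := by rw [hdiff n, ← hSA]
  have hpow1 : ∀ j : ℕ, (a*c)^(j+1) = (d*b)^j*(a*c) := by
    intro j; induction j with
    | zero => simp
    | succ j ih =>
      calc (a*c)^(j+2) = (a*c)^(j+1)*(a*c) := by rw [pow_succ]
        _ = ((d*b)^j*(a*c))*(a*c) := by rw [ih]
        _ = (d*b)^j*((a*c)*(a*c)) := by noncomm_ring
        _ = (d*b)^j*((a*c)^2) := by rw [← pow_two]
        _ = (d*b)^j*((d*b)*(a*c)) := by rw [h1]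
        _ = ((d*b)^j*(d*b))*(a*c) := by noncomm_ring
        _ = (d*b)^(j+1)*(a*c) := by rw [← pow_succ]
  have hpow2 : ∀ j : ℕ, (a*c)^j*(d*b) = (d*b)^(j+1) := by
    intro j; induction j with
    | zero => simp
    | succ j ih =>
      calc (a*c)^(j+1)*(d*b) = ((a*c)^j*(a*c))*(d*b) := by rw [pow_succ]
        _ = (a*c)^j*((a*c)*(d*b)) := by noncomm_ring
        _ = (a*c)^j*((d*b)^2) := by rw [← h2]
        _ = (a*c)^j*((d*b)*(d*b)) := by rw [pow_two]
        _ = ((a*c)^j*(d*b))*(d*b) := by noncomm_ring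
        _ = (d*b)^(j+1)*(d*b) := by rw [ih]
        _ = (d*b)^(j+2) := by rw [← pow_succ]
  have hbv : ∀ j : ℕ, b*(d*b)^j = (b*d)^j*b := by
    intro j; induction j with
    | zero => simp
    | succ j ih =>
      calc b*(d*b)^(j+1) = b*((d*b)^j*(d*b)) := by rw [pow_succ]
        _ = (b*(d*b)^j)*(d*b) := by noncomm_ring
        _ = ((b*d)^j*b)*(d*b) := by rw [ih]
        _ = (b*d)^j*((b*d)*b) := by noncomm_ring
        _ = ((b*d)^j*(b*d))*b := by noncomm_ring
        _ = (b*d)^(j+1)*b := by rw [← pow_succ]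
  have hcu : ∀ j : ℕ, c*(a*c)^j = (c*a)^j*c := by
    intro j; induction j with
    | zero => simp
    | succ j ih =>
      calc c*(a*c)^(j+1) = c*((a*c)^j*(a*c)) := by rw [pow_succ]
        _ = (c*(a*c)^j)*(a*c) := by noncomm_ring
        _ = ((c*a)^j*c)*(a*c) := by rw [ih]
        _ = (c*a)^j*((c*a)*c) := by noncomm_ring
        _ = ((c*a)^j*(c*a))*c := by noncomm_ring
        _ = (c*a)^(j+1)*c := by rw [← pow_succ]
  have L3 : ∀ j : ℕ, b*(a*c)^(j+1)*a = b*(d*b)^(j+1)*a := by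
    intro j
    calc b*(a*c)^(j+1)*a = b*((d*b)^j*(a*c))*a := by rw [hpow1]
      _ = (b*(d*b)^j)*((a*c)*a) := by noncomm_ring
      _ = ((b*d)^j*b)*((a*c)*a) := by rw [hbv]
      _ = (b*d)^j*(b*(a*c)*a) := by noncomm_ring
      _ = (b*d)^j*(b*(d*b)*a) := by rw [h3]
      _ = ((b*d)^j*b)*((d*b)*a) := by noncomm_ring
      _ = (b*(d*b)^j)*((d*b)*a) := by rw [← hbv]
      _ = b*((d*b)^j*(d*b))*a := by noncomm_ring
      _ = b*(d*b)^(j+1)*a := by rw [← pow_succ]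
  have L4 : ∀ j : ℕ, c*(a*c)^(j+1)*d = c*(d*b)^(j+1)*d := by
    intro j
    calc c*(a*c)^(j+1)*d = c*((a*c)^j*(a*c))*d := by rw [pow_succ]
      _ = (c*(a*c)^j)*((a*c)*d) := by noncomm_ring
      _ = ((c*a)^j*c)*((a*c)*d) := by rw [hcu]
      _ = (c*a)^j*(c*(a*c)*d) := by noncomm_ring
      _ = (c*a)^j*(c*(d*b)*d) := by rw [h4]
      _ = ((c*a)^j*c)*((d*b)*d) := by noncomm_ring
      _ = (c*(a*c)^j)*((d*b)*d) := by rw [← hcu]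
      _ = c*((a*c)^j*(d*b))*d := by noncomm_ring
      _ = c*(d*b)^(j+1)*d := by rw [hpow2]
  have hbw0 : b*w*a = 0 := by
    have h0 : b*w*a = b*(a*c)*a - b*(d*b)*a := by rw [hw]; noncomm_ring
    rw [h0, h3]; exact sub_self _
  have hcw0 : c*w*d = 0 := by
    have h0 : c*w*d = c*(a*c)*d - c*(d*b)*d := by rw [hw]; noncomm_ring
    rw [h0, h4]; exact sub_self _
  have huw : (a*c)*w = (d*b)*w := by
    calc (a*c)*w = (a*c)*(a*c) - (a*c)*(d*b) := by rw [hw]; noncomm_ring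
      _ = (d*b)*(a*c) - (a*c)*(d*b) := by rw [← pow_two, h1]
      _ = (d*b)*(a*c) - (d*b)^2 := by rw [← h2]
      _ = (d*b)*(a*c) - (d*b)*(d*b) := by rw [pow_two]
      _ = (d*b)*w := by rw [hw]; noncomm_ring
  have hpw : ∀ k : ℕ, (a*c)^(k+1)*w = (d*b)^(k+1)*w := by
    intro k
    calc (a*c)^(k+1)*w = ((d*b)^k*(a*c))*w := by rw [hpow1]
      _ = (d*b)^k*((a*c)*w) := by noncomm_ring
      _ = (d*b)^k*((d*b)*w) := by rw [huw]
      _ = ((d*b)^k*(d*b))*w := by noncomm_ring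
      _ = (d*b)^(k+1)*w := by rw [← pow_succ]
  have hbw : ∀ k : ℕ, b*((a*c)^k*w)*a = 0 := by
    intro k; cases k with
    | zero => simp only [pow_zero, one_mul]; exact hbw0
    | succ k =>
      calc b*((a*c)^(k+1)*w)*a = b*((d*b)^(k+1)*w)*a := by rw [hpw]
        _ = b*((d*b)^(k+1)*(a*c))*a - b*((d*b)^(k+1)*(d*b))*a := by
              conv_lhs => rw [hw]
              rw [mul_sub]; noncomm_ring
        _ = b*(a*c)^(k+2)*a - b*(d*b)^(k+2)*a := by rw [← hpow1, ← pow_succ]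
        _ = 0 := by rw [L3]; exact sub_self _
  have hcw : ∀ k : ℕ, c*((a*c)^k*w)*d = 0 := by
    intro k; cases k with
    | zero => simp only [pow_zero, one_mul]; exact hcw0
    | succ k =>
      calc c*((a*c)^(k+1)*w)*d = c*((d*b)^(k+1)*w)*d := by rw [hpw]
        _ = c*((d*b)^(k+1)*(a*c))*d - c*((d*b)^(k+1)*(d*b))*d := by
              conv_lhs => rw [hw]
              rw [mul_sub]; noncomm_ring
        _ = c*(a*c)^(k+2)*d - c*(d*b)^(k+2)*d := by rw [← hpow1, ← pow_succ]
        _ = 0 := by rw [L4]; exact sub_self _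
  have hbAw : ∀ i k : ℕ, b*((1 - a*c)^i*((a*c)^k*w))*a = 0 := by
    intro i; induction i with
    | zero => intro k; simp only [pow_zero, one_mul]; exact hbw k
    | succ i ih =>
      intro k
      have hstep : (1 - a*c)^(i+1)*((a*c)^k*w)
          = (1 - a*c)^i*((a*c)^k*w) - (1 - a*c)^i*((a*c)^(k+1)*w) := by
        calc (1 - a*c)^(i+1)*((a*c)^k*w)
            = (1 - a*c)^i*((1 - a*c)*((a*c)^k*w)) := by rw [pow_succ]; noncomm_ring
          _ = (1 - a*c)^i*((a*c)^k*w - (a*c)^(k+1)*w) := by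
                rw [show (1 - a*c)*((a*c)^k*w) = (a*c)^k*w - (a*c)^(k+1)*w from by
                  rw [show (a*c)^(k+1)*w = (a*c)*((a*c)^k*w) from by
                    rw [pow_succ']; noncomm_ring]
                  noncomm_ring]
          _ = (1 - a*c)^i*((a*c)^k*w) - (1 - a*c)^i*((a*c)^(k+1)*w) := by rw [mul_sub]
      have hsplit : b*((1 - a*c)^(i+1)*((a*c)^k*w))*a
          = b*((1 - a*c)^i*((a*c)^k*w))*a - b*((1 - a*c)^i*((a*c)^(k+1)*w))*a := by
        rw [hstep]; noncomm_ring
      rw [hsplit, ih k, ih (k+1)]; exact sub_self _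
  have hcAw : ∀ i k : ℕ, c*((1 - a*c)^i*((a*c)^k*w))*d = 0 := by
    intro i; induction i with
    | zero => intro k; simp only [pow_zero, one_mul]; exact hcw k
    | succ i ih =>
      intro k
      have hstep : (1 - a*c)^(i+1)*((a*c)^k*w)
          = (1 - a*c)^i*((a*c)^k*w) - (1 - a*c)^i*((a*c)^(k+1)*w) := by
        calc (1 - a*c)^(i+1)*((a*c)^k*w)
            = (1 - a*c)^i*((1 - a*c)*((a*c)^k*w)) := by rw [pow_succ]; noncomm_ring
          _ = (1 - a*c)^i*((a*c)^k*w - (a*c)^(k+1)*w) := by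
                rw [show (1 - a*c)*((a*c)^k*w) = (a*c)^k*w - (a*c)^(k+1)*w from by
                  rw [show (a*c)^(k+1)*w = (a*c)*((a*c)^k*w) from by
                    rw [pow_succ']; noncomm_ring]
                  noncomm_ring]
          _ = (1 - a*c)^i*((a*c)^k*w) - (1 - a*c)^i*((a*c)^(k+1)*w) := by rw [mul_sub]
      have hsplit : c*((1 - a*c)^(i+1)*((a*c)^k*w))*d
          = c*((1 - a*c)^i*((a*c)^k*w))*d - c*((1 - a*c)^i*((a*c)^(k+1)*w))*d := by
        rw [hstep]; noncomm_ring
      rw [hsplit, ih k, ih (k+1)]; exact sub_self _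
  have hbSAw : b*(SA*w)*a = 0 := by
    rw [hSA, Finset.sum_mul, Finset.mul_sum, Finset.sum_mul]
    apply Finset.sum_eq_zero; intro j _
    have h0 := hbAw j 0
    simp only [pow_zero, one_mul] at h0
    exact h0
  have hcSAw : c*(SA*w)*d = 0 := by
    rw [hSA, Finset.sum_mul, Finset.mul_sum, Finset.sum_mul]
    apply Finset.sum_eq_zero; intro j _
    have h0 := hcAw j 0
    simp only [pow_zero, one_mul] at h0
    exact h0
  have hstar1 : (SA*a)*c = 1 - (1 - a*c)^n := by rw [mul_assoc, geomA]
  have hstar2 : (SB*d)*b = 1 - (1 - d*b)^n := by rw [mul_assoc, geomB]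
  have hkey1 : ((1 - d*b)^n - (1 - a*c)^n)*(1 - a*c)^n = (1 - d*b)^n - (1 - a*c)^n := by
    rw [hdiffn, mul_assoc, hwAk]
  have hkey2 : ((1 - d*b)^n - (1 - a*c)^n)*(1 - d*b)^n = (1 - d*b)^n - (1 - a*c)^n := by
    rw [hdiffn, mul_assoc, hwBk]
  have h1' : ((SA*a)*c)^2 = ((SB*d)*b)*((SA*a)*c) := by
    rw [hstar1, hstar2]
    have hz : (1 - (1 - a*c)^n)^2 - (1 - (1 - d*b)^n)*(1 - (1 - a*c)^n) = 0 := by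
      have hexp : (1 - (1 - a*c)^n)^2 - (1 - (1 - d*b)^n)*(1 - (1 - a*c)^n)
          = ((1 - d*b)^n - (1 - a*c)^n) - ((1 - d*b)^n - (1 - a*c)^n)*(1 - a*c)^n := by
        noncomm_ring
      rw [hexp, hkey1]; exact sub_self _
    exact sub_eq_zero.mp hz
  have h2' : ((SB*d)*b)^2 = ((SA*a)*c)*((SB*d)*b) := by
    rw [hstar1, hstar2]
    have hz : (1 - (1 - d*b)^n)^2 - (1 - (1 - a*c)^n)*(1 - (1 - d*b)^n) = 0 := by
      have hexp : (1 - (1 - d*b)^n)^2 - (1 - (1 - a*c)^n)*(1 - (1 - d*b)^n)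
          = (((1 - d*b)^n - (1 - a*c)^n)*(1 - d*b)^n) - ((1 - d*b)^n - (1 - a*c)^n) := by
        noncomm_ring
      rw [hexp, hkey2]; exact sub_self _
    exact sub_eq_zero.mp hz
  have h3' : b*((SA*a)*c)*(SA*a) = b*((SB*d)*b)*(SA*a) := by
    rw [hstar1, hstar2]
    have hterm : ∀ j : ℕ, b*((SA*w)*(1 - a*c)^j)*a = 0 := by
      intro j; rw [mul_assoc SA w, hwAk]; exact hbSAw
    have hsum : b*((SA*w)*SA)*a = 0 := by
      nth_rewrite 2 [hSA]
      rw [Finset.mul_sum, Finset.mul_sum, Finset.sum_mul]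
      apply Finset.sum_eq_zero; intro j _
      exact hterm j
    have hz : b*(1 - (1 - a*c)^n)*(SA*a) - b*(1 - (1 - d*b)^n)*(SA*a) = 0 := by
      have hexp : b*(1 - (1 - a*c)^n)*(SA*a) - b*(1 - (1 - d*b)^n)*(SA*a)
          = b*(((1 - d*b)^n - (1 - a*c)^n)*SA)*a := by noncomm_ring
      rw [hexp, hdiffn]; exact hsum
    exact sub_eq_zero.mp hz
  have h4' : c*((SA*a)*c)*(SB*d) = c*((SB*d)*b)*(SB*d) := by
    rw [hstar1, hstar2]
    have hterm : ∀ j : ℕ, c*((SA*w)*(1 - d*b)^j)*d = 0 := by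
      intro j; rw [mul_assoc SA w, hwBk]; exact hcSAw
    have hsum : c*((SA*w)*SB)*d = 0 := by
      rw [hSB, Finset.mul_sum, Finset.mul_sum, Finset.sum_mul]
      apply Finset.sum_eq_zero; intro j _
      exact hterm j
    have hz : c*(1 - (1 - a*c)^n)*(SB*d) - c*(1 - (1 - d*b)^n)*(SB*d) = 0 := by
      have hexp : c*(1 - (1 - a*c)^n)*(SB*d) - c*(1 - (1 - d*b)^n)*(SB*d)
          = c*(((1 - d*b)^n - (1 - a*c)^n)*SB)*d := by noncomm_ring
      rw [hexp, hdiffn]; exact hsum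
    exact sub_eq_zero.mp hz
  constructor
  · rintro ⟨x, hx⟩
    rw [key2] at hx
    rw [key1]
    have s1 := jac_pair b (SB*d) ⟨x, hx⟩
    have s2 := main_n1 (SB*d) c b (SA*a) h2' h1' h4'.symm h3'.symm s1
    exact jac_pair c (SA*a) s2
  · rintro ⟨x, hx⟩
    rw [key1] at hx
    rw [key2]
    exact main_n1 (SA*a) b c (SB*d) h1' h2' h3' h4' ⟨x, hx⟩

end Power

theorem gdrazin_pow_iff {R : Type*} [Ring R] (n : ℕ) (hn : 1 ≤ n) (a b c d : R)
    (h1 : (a * c) ^ 2 = (d * b) * (a * c)) (h2 : (d * b) ^ 2 = (a * c) * (d * b))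
    (h3 : b * (a * c) * a = b * (d * b) * a) (h4 : c * (a * c) * d = c * (d * b) * d) :
    (∃ x : R, IsGDrazin ((1 - b * d) ^ n) x) ↔ (∃ y : R, IsGDrazin ((1 - a * c) ^ n) y) :=
  gdrazin_pow_iff' n a b c d h1 h2 h3 h4
end

section
/- Let R be a ring and a,b,c,d ∈ R satisfy acd = dbd and dba = aca. Then 1 - bd is Drazin invertible if and only if 1 - ac is Drazin invertible, and i(1-ac) ≤ i(1-bd) + 1. -/
/-- `x` is a Drazin inverse of `a` with (an) index `k`. -/
def IsDrazinWithIndex {R : Type*} [Ring R] (a x : R) (k : ℕ) : Prop :=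
  x = x * a * x ∧ x * a = a * x ∧ a ^ k = a ^ (k + 1) * x

/-- The Drazin index: the least `k` admitting a Drazin inverse with index `k`. -/
noncomputable def drazinIndex {R : Type*} [Ring R] (a : R) : ℕ :=
  sInf {k : ℕ | ∃ x : R, IsDrazinWithIndex a x k}

/-- auxiliary sequence -/
def drazinNseq {A : Type*} [Ring A] (B : A) : ℕ → A
  | 0 => 0
  | n+1 => (n : A) + drazinNseq B n * B

theorem drazin_commCore {A : Type*} [CommRing A] (B X : A) (k : ℕ)
    (hXX : X * B * X = X) (hK : B ^ k = B ^ (k+1) * X) :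
    ∃ Y W : A,
      (1 - B) * Y = Y - 1 + W * W ∧
      Y * (1 - B) = Y - 1 + W * W ∧
      W * W * (1 - B) = W ∧
      W * W * ((1 - B) * ((1 - B) * Y)) = -(W + W * W) ∧
      (Y - ((k+2 : ℕ) : A) - ((k+2 : ℕ) : A) * ((1 - B) * Y) + drazinNseq B (k+2)
        + drazinNseq B (k+2) * (1 - B)
        + drazinNseq B (k+2) * ((1 - B) * ((1 - B) * Y)) = drazinNseq B (k+1)) := by
  set P : A := 1 - B * X with hPdef
  set S : A := ∑ i ∈ Finset.range (k+1), B^i with hSdef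
  set W : A := S * P with hWdef
  have hP2 : P^2 = P := by rw [hPdef]; linear_combination B * hXX
  have hXP : X * P = 0 := by rw [hPdef]; linear_combination -hXX
  have hkP : B^k * P = 0 := by rw [hPdef]; linear_combination hK
  have hgeom : S * (1 - B) = 1 - B^(k+1) := by
    have h := geom_sum_mul B (k+1)
    rw [hSdef]; linear_combination -h
  have hWB : W * (1 - B) = P := by
    rw [hWdef]; linear_combination P * hgeom - B * hkP
  have hWP : W * P = W := by rw [hWdef]; linear_combination S * hP2
  have cE1 : (1 - B) * (X - W - W^2) = (X - W - W^2) - 1 + W^2 := by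
    linear_combination (-(1:A) - W) * hWB - hWP
  have cE3 : W^2 * (1 - B) = W := by linear_combination W * hWB + hWP
  have f1 : P * (X - W - W^2) = -(W + W^2) := by
    linear_combination hXP - hWP - W * hWP
  have f2 : W^2 * (1-B)^2 = P := by linear_combination (1-B) * cE3 + hWB
  have cE2 : W^2 * ((1 - B) * ((1 - B) * (X - W - W^2))) = -(W + W^2) := by
    linear_combination (X - W - W^2) * f2 + f1
  have f4 : B^(k+2) * (X - W - W^2) = B^(k+1) := by
    rw [hWdef]
    linear_combination (-B) * hK - S * B^2 * hkP - S^2 * P * B^2 * hkP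
  have nB : ∀ n : ℕ, drazinNseq B n * (1 - B) = (n : A) - ∑ i ∈ Finset.range n, B^i := by
    intro n
    induction n with
    | zero => simp [drazinNseq]
    | succ n ih =>
      rw [geom_sum_succ]
      show ((n : A) + drazinNseq B n * B) * (1 - B) = _
      push_cast
      linear_combination B * ih
  have g2 : drazinNseq B (k+1) * (1 - B) = ((k+1 : ℕ) : A) - S := by
    rw [hSdef]; exact nB (k+1)
  have hN2 : drazinNseq B (k+2) = ((k+1 : ℕ) : A) + drazinNseq B (k+1) * B := by
    show ((k+1 : ℕ) : A) + _ = _; push_cast; ring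
  refine ⟨X - W - W^2, W, by linear_combination cE1, by linear_combination cE1,
    by linear_combination cE3, by linear_combination cE2, ?_⟩
  rw [hN2]
  push_cast at g2 hgeom f4 ⊢
  linear_combination (B - 1 + B * (1-B) * (X - W - W^2)) * g2
    + (1 - B * (X - W - W^2)) * hgeom + f4

theorem drazin_transfer {R : Type*} [Ring R] (a b c d x : R) (k : ℕ)
    (h1 : a * c * d = d * b * d) (h2 : d * b * a = a * c * a)
    (hx : IsDrazinWithIndex (1 - b * d) x k) :
    ∃ y : R, IsDrazinWithIndex (1 - a * c) y (k + 1) := by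
  obtain ⟨hx1, hx2, hx3⟩ := hx
  set β : R := 1 - b * d with hβdef
  have hbd : b * d = 1 - β := by rw [hβdef]; noncomm_ring
  have r_acac : a * c * (a * c) = d * (b * (a * c)) := by
    calc a * c * (a * c) = (a*c*a) * c := by noncomm_ring
    _ = (d*b*a) * c := by rw [h2]
    _ = d * (b * (a*c)) := by noncomm_ring
  have r_acd : ∀ z : R, a * c * (d * z) = d * (b * (d * z)) := by
    intro z
    calc a * c * (d*z) = (a*c*d) * z := by noncomm_ring
    _ = (d*b*d) * z := by rw [h1]
    _ = d * (b * (d*z)) := by noncomm_ring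
  letI : CommRing (Subring.closure ({β, x} : Set R)) := Subring.closureCommRingOfComm (by
    intro p hp q hq
    simp only [Set.mem_insert_iff, Set.mem_singleton_iff] at hp hq
    rcases hp with rfl | rfl <;> rcases hq with rfl | rfl <;>
      first | rfl | exact hx2 | exact hx2.symm)
  have hBmem : β ∈ Subring.closure ({β, x} : Set R) := Subring.subset_closure (by simp)
  have hXmem : x ∈ Subring.closure ({β, x} : Set R) := Subring.subset_closure (by simp)
  set B : Subring.closure ({β, x} : Set R) := ⟨β, hBmem⟩ with hBdef
  set X : Subring.closure ({β, x} : Set R) := ⟨x, hXmem⟩ with hXdef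
  have hpow : ∀ n : ℕ, ((B ^ n : _) : R) = β ^ n := by
    intro n
    induction n with
    | zero => rfl
    | succ n ih => rw [pow_succ, pow_succ, ← ih]; rfl
  have hXX : X * B * X = X := Subtype.ext hx1.symm
  have hK : B ^ k = B ^ (k+1) * X := by
    apply Subtype.ext
    have e1 : ((B^(k+1) * X : _) : R) = ((B^(k+1) : _) : R) * x := rfl
    show ((B^k : _) : R) = _
    rw [e1, hpow, hpow]; exact hx3
  obtain ⟨Y, W, cE1, cE1', cE3, cE2, cE4⟩ := drazin_commCore B X k hXX hK
  set u : R := ((Y : _) : R) with hu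
  set v : R := ((W : _) : R) with hv
  set NR : ℕ → R := fun n => ((drazinNseq B n : _) : R) with hNR
  have hNRsucc : ∀ n : ℕ, NR (n+1) = (n : R) + NR n * β := fun n => rfl
  have hNR0 : NR 0 = 0 := rfl
  have rE1 : (1 - β) * u = u - 1 + v * v := congrArg Subtype.val cE1
  have rE1' : u * (1 - β) = u - 1 + v * v := congrArg Subtype.val cE1'
  have rE3 : v * v * (1 - β) = v := congrArg Subtype.val cE3
  have rE2 : v * v * ((1 - β) * ((1 - β) * u)) = -(v + v * v) := congrArg Subtype.val cE2
  have rE4 : u - ((k+2 : ℕ) : R) - ((k+2 : ℕ) : R) * ((1 - β) * u) + NR (k+2)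
      + NR (k+2) * (1 - β) + NR (k+2) * ((1 - β) * ((1 - β) * u)) = NR (k+1) :=
    congrArg Subtype.val cE4
  -- the candidate Drazin inverse
  set y : R := 1 + a*c + d*u*(b*(a*c)) with hy
  have stepI : (1 - a*c) * y = 1 - d*(v*v)*(b*(a*c)) := by
    rw [hy]
    calc (1 - a*c) * (1 + a*c + d*u*(b*(a*c)))
        = 1 + d*u*(b*(a*c)) - a*c*(a*c) - a*c*(d*(u*(b*(a*c)))) := by noncomm_ring
      _ = 1 + d*u*(b*(a*c)) - d*(b*(a*c)) - d*(b*(d*(u*(b*(a*c))))) := by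
          rw [r_acac, r_acd]
      _ = 1 + d*u*(b*(a*c)) - d*(b*(a*c)) - d*((b*d)*u)*(b*(a*c)) := by noncomm_ring
      _ = 1 + d*u*(b*(a*c)) - d*(b*(a*c)) - d*((1-β)*u)*(b*(a*c)) := by rw [hbd]
      _ = 1 + d*u*(b*(a*c)) - d*(b*(a*c)) - d*(u - 1 + v*v)*(b*(a*c)) := by rw [rE1]
      _ = 1 - d*(v*v)*(b*(a*c)) := by noncomm_ring
  have stepI' : y * (1 - a*c) = 1 - d*(v*v)*(b*(a*c)) := by
    rw [hy]
    calc (1 + a*c + d*u*(b*(a*c))) * (1 - a*c)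
        = 1 + d*u*(b*(a*c)) - a*c*(a*c) - d*u*(b*(a*c*(a*c))) := by noncomm_ring
      _ = 1 + d*u*(b*(a*c)) - d*(b*(a*c)) - d*u*(b*(d*(b*(a*c)))) := by
          rw [r_acac]
      _ = 1 + d*u*(b*(a*c)) - d*(b*(a*c)) - d*(u*(b*d))*(b*(a*c)) := by noncomm_ring
      _ = 1 + d*u*(b*(a*c)) - d*(b*(a*c)) - d*(u*(1-β))*(b*(a*c)) := by rw [hbd]
      _ = 1 + d*u*(b*(a*c)) - d*(b*(a*c)) - d*(u - 1 + v*v)*(b*(a*c)) := by rw [rE1']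
      _ = 1 - d*(v*v)*(b*(a*c)) := by noncomm_ring
  have stepII : (1 - d*(v*v)*(b*(a*c))) * y = y := by
    rw [hy]
    calc (1 - d*(v*v)*(b*(a*c))) * (1 + a*c + d*u*(b*(a*c)))
        = 1 + a*c + d*u*(b*(a*c)) - d*(v*v)*(b*(a*c))
            - d*(v*v)*(b*(a*c*(a*c))) - d*(v*v)*(b*(a*c*(d*(u*(b*(a*c)))))) := by
          noncomm_ring
      _ = 1 + a*c + d*u*(b*(a*c)) - d*(v*v)*(b*(a*c))
            - d*(v*v)*(b*(d*(b*(a*c)))) - d*(v*v)*(b*(d*(b*(d*(u*(b*(a*c))))))) := by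
          rw [r_acac, r_acd]
      _ = 1 + a*c + d*u*(b*(a*c)) - d*(v*v)*(b*(a*c))
            - d*(v*v*(b*d))*(b*(a*c)) - d*(v*v*((b*d)*((b*d)*u)))*(b*(a*c)) := by
          noncomm_ring
      _ = 1 + a*c + d*u*(b*(a*c)) - d*(v*v)*(b*(a*c))
            - d*(v*v*(1-β))*(b*(a*c)) - d*(v*v*((1-β)*((1-β)*u)))*(b*(a*c)) := by
          rw [hbd]
      _ = 1 + a*c + d*u*(b*(a*c)) - d*(v*v)*(b*(a*c))
            - d*v*(b*(a*c)) - d*(-(v + v*v))*(b*(a*c)) := by rw [rE3, rE2]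
      _ = 1 + a*c + d*u*(b*(a*c)) := by noncomm_ring
  have powα : ∀ n : ℕ, (1 - a*c)^n = 1 - (n : R)*(a*c) + d*(NR n)*(b*(a*c)) := by
    intro n
    induction n with
    | zero => rw [pow_zero, hNR0]; push_cast; noncomm_ring
    | succ n ih =>
      have hmove : (n : R) * (d * (b*(a*c))) = d*((n : R))*(b*(a*c)) := by
        rw [← mul_assoc, (Nat.cast_commute n d).eq]
      rw [pow_succ, ih, hNRsucc]
      calc (1 - (n : R)*(a*c) + d*(NR n)*(b*(a*c))) * (1 - a*c)
          = 1 - (n : R)*(a*c) + d*(NR n)*(b*(a*c)) - a*c + (n : R)*(a*c*(a*c))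
              - d*(NR n)*(b*(a*c*(a*c))) := by noncomm_ring
        _ = 1 - (n : R)*(a*c) + d*(NR n)*(b*(a*c)) - a*c + (n : R)*(d*(b*(a*c)))
              - d*(NR n)*(b*(d*(b*(a*c)))) := by rw [r_acac]
        _ = 1 - (n : R)*(a*c) + d*(NR n)*(b*(a*c)) - a*c + d*((n : R))*(b*(a*c))
              - d*(NR n*(b*d))*(b*(a*c)) := by rw [hmove]; noncomm_ring
        _ = 1 - (n : R)*(a*c) + d*(NR n)*(b*(a*c)) - a*c + d*((n : R))*(b*(a*c))
              - d*(NR n*(1-β))*(b*(a*c)) := by rw [hbd]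
        _ = 1 - ((n+1 : ℕ) : R)*(a*c) + d*((n : R) + NR n * β)*(b*(a*c)) := by
            push_cast; noncomm_ring
  have stepIII : (1 - a*c)^(k+2) * y = (1 - a*c)^(k+1) := by
    rw [powα (k+2), powα (k+1), hy]
    have hmove2 : ∀ z : R, ((k+2 : ℕ) : R) * (d * z) = d*(((k+2 : ℕ) : R))*z := by
      intro z
      rw [← mul_assoc, (Nat.cast_commute (k+2) d).eq]
    calc (1 - ((k+2 : ℕ) : R)*(a*c) + d*(NR (k+2))*(b*(a*c)))
          * (1 + a*c + d*u*(b*(a*c)))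
        = 1 + a*c + d*u*(b*(a*c)) - ((k+2 : ℕ) : R)*(a*c)
            - ((k+2 : ℕ) : R)*(a*c*(a*c)) - ((k+2 : ℕ) : R)*(a*c*(d*(u*(b*(a*c)))))
            + d*(NR (k+2))*(b*(a*c)) + d*(NR (k+2))*(b*(a*c*(a*c)))
            + d*(NR (k+2))*(b*(a*c*(d*(u*(b*(a*c)))))) := by noncomm_ring
      _ = 1 + a*c + d*u*(b*(a*c)) - ((k+2 : ℕ) : R)*(a*c)
            - ((k+2 : ℕ) : R)*(d*(b*(a*c))) - ((k+2 : ℕ) : R)*(d*(b*(d*(u*(b*(a*c))))))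
            + d*(NR (k+2))*(b*(a*c)) + d*(NR (k+2))*(b*(d*(b*(a*c))))
            + d*(NR (k+2))*(b*(d*(b*(d*(u*(b*(a*c))))))) := by
          simp only [r_acac, r_acd]
      _ = 1 + a*c + d*u*(b*(a*c)) - ((k+2 : ℕ) : R)*(a*c)
            - d*(((k+2 : ℕ) : R))*(b*(a*c)) - d*(((k+2 : ℕ) : R))*(b*(d*(u*(b*(a*c)))))
            + d*(NR (k+2))*(b*(a*c)) + d*(NR (k+2))*(b*(d*(b*(a*c))))
            + d*(NR (k+2))*(b*(d*(b*(d*(u*(b*(a*c))))))) := by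
          rw [hmove2, hmove2]
      _ = 1 + a*c - ((k+2 : ℕ) : R)*(a*c)
            + d*(u - ((k+2 : ℕ) : R) - ((k+2 : ℕ) : R)*((b*d)*u) + NR (k+2)
                + NR (k+2)*(b*d) + NR (k+2)*((b*d)*((b*d)*u)))*(b*(a*c)) := by
          noncomm_ring
      _ = 1 + a*c - ((k+2 : ℕ) : R)*(a*c)
            + d*(u - ((k+2 : ℕ) : R) - ((k+2 : ℕ) : R)*((1-β)*u) + NR (k+2)
                + NR (k+2)*(1-β) + NR (k+2)*((1-β)*((1-β)*u)))*(b*(a*c)) := by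
          rw [hbd]
      _ = 1 + a*c - ((k+2 : ℕ) : R)*(a*c) + d*(NR (k+1))*(b*(a*c)) := by rw [rE4]
      _ = 1 - ((k+1 : ℕ) : R)*(a*c) + d*(NR (k+1))*(b*(a*c)) := by
          push_cast; noncomm_ring
  refine ⟨y, ?_, stepI'.trans stepI.symm, ?_⟩
  · conv_lhs => rw [← stepII, ← stepI']
  · show (1 - a*c)^(k+1) = (1 - a*c)^(k+2) * y
    exact stepIII.symm

theorem drazin_special {R : Type*} [Ring R] (a b c d : R)
    (h1 : a * c * d = d * b * d) (h2 : d * b * a = a * c * a) :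
    ((∃ x : R, ∃ k : ℕ, IsDrazinWithIndex (1 - b * d) x k) ↔
      (∃ y : R, ∃ k : ℕ, IsDrazinWithIndex (1 - a * c) y k)) ∧
    ((∃ x : R, ∃ k : ℕ, IsDrazinWithIndex (1 - b * d) x k) →
      drazinIndex (1 - a * c) ≤ drazinIndex (1 - b * d) + 1) := by
  constructor
  · constructor
    · rintro ⟨x, k, hx⟩
      obtain ⟨y, hy⟩ := drazin_transfer a b c d x k h1 h2 hx
      exact ⟨y, k+1, hy⟩
    · rintro ⟨y0, k, hy0⟩
      obtain ⟨y1, hy1⟩ := drazin_transfer c a a c y0 k rfl rfl hy0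
      obtain ⟨y2, hy2⟩ := drazin_transfer d c b a y1 (k+1) h2 h1 hy1
      obtain ⟨y3, hy3⟩ := drazin_transfer b d d b y2 (k+1+1) rfl rfl hy2
      exact ⟨y3, k+1+1+1, hy3⟩
  · rintro ⟨x, k, hx⟩
    have hne : {m : ℕ | ∃ z : R, IsDrazinWithIndex (1 - b*d) z m}.Nonempty := ⟨k, x, hx⟩
    obtain ⟨x0, hx0⟩ := Nat.sInf_mem hne
    obtain ⟨y, hy⟩ :=
      drazin_transfer a b c d x0 (sInf {m : ℕ | ∃ z : R, IsDrazinWithIndex (1 - b*d) z m})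
        h1 h2 hx0
    exact Nat.sInf_le ⟨y, hy⟩
end
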